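/- Let b : ℝ → ℝ be Lipschitz continuous with Lipschitz constant L and 1-periodic, and let y_x(t) denote the solution of the ODE ẏ = b(y), y(0) = x. Then for any u ∈ L²(0,1) (extended 1-periodically) and any t ∈ ℝ, the function x ↦ u(y_x(−t)) satisfies ‖u(y_·(−t))‖_{L²(0,1)} ≤ e^{L|t|/2} ‖u‖_{L²(0,1)}. -/

import Mathlib

open MeasureTheory Set Real
open scoped NNReal ENNReal

/-- Global uniqueness of ODE solutions, both directions in time. -/
lemma ode_eq_aux {K : ℝ≥0} {v : ℝ → ℝ} (hv : LipschitzWith K v) {f g : ℝ → ℝ}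
    (hf : ∀ s, HasDerivAt f (v (f s)) s) (hg : ∀ s, HasDerivAt g (v (g s)) s)
    (h0 : f 0 = g 0) (s : ℝ) : f s = g s := by
  have hR : (0:ℝ) < |s| + 1 := by positivity
  have H := ODE_solution_unique_of_mem_Icc (v := fun _ x => v x) (s := fun _ => univ)
    (fun _ _ => hv.lipschitzOnWith) (t₀ := 0) (a := -(|s|+1)) (b := |s|+1)
    (by constructor <;> linarith)
    (continuous_iff_continuousAt.2 fun x => (hf x).continuousAt).continuousOn
    (fun r _ => hf r) (fun _ _ => trivial)
    (continuous_iff_continuousAt.2 fun x => (hg x).continuousAt).continuousOn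
    (fun r _ => hg r) (fun _ _ => trivial) h0
  exact H ⟨by linarith [neg_abs_le s], by linarith [le_abs_self s]⟩

/-- Grönwall, forward in time. -/
lemma ode_dist_fwd {K : ℝ≥0} {v : ℝ → ℝ} (hv : LipschitzWith K v) {f g : ℝ → ℝ}
    (hf : ∀ s, HasDerivAt f (v (f s)) s) (hg : ∀ s, HasDerivAt g (v (g s)) s)
    {s : ℝ} (hs : 0 ≤ s) :
    dist (f s) (g s) ≤ dist (f 0) (g 0) * Real.exp (K * s) := by
  have H := dist_le_of_trajectories_ODE (v := fun _ x => v x) (fun _ => hv)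
    (a := 0) (b := s)
    (continuous_iff_continuousAt.2 fun x => (hf x).continuousAt).continuousOn
    (fun r _ => (hf r).hasDerivWithinAt)
    (continuous_iff_continuousAt.2 fun x => (hg x).continuousAt).continuousOn
    (fun r _ => (hg r).hasDerivWithinAt) le_rfl s ⟨hs, le_rfl⟩
  simpa using H

/-- Grönwall, both directions in time. -/
lemma ode_dist_aux {K : ℝ≥0} {v : ℝ → ℝ} (hv : LipschitzWith K v) {f g : ℝ → ℝ}
    (hf : ∀ s, HasDerivAt f (v (f s)) s) (hg : ∀ s, HasDerivAt g (v (g s)) s)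
    (s : ℝ) : dist (f s) (g s) ≤ dist (f 0) (g 0) * Real.exp (K * |s|) := by
  rcases le_or_gt 0 s with hs | hs
  · rw [abs_of_nonneg hs]; exact ode_dist_fwd hv hf hg hs
  · have hw : LipschitzWith K (fun x => -v x) := by
      intro a b
      simpa [edist_neg_neg] using hv a b
    have hF : ∀ r, HasDerivAt (fun r => f (-r)) ((fun x => -v x) (f (-r))) r := by
      intro r
      have := (hf (-r)).comp r (hasDerivAt_neg r)
      simpa [mul_comm, Function.comp_def] using this
    have hG : ∀ r, HasDerivAt (fun r => g (-r)) ((fun x => -v x) (g (-r))) r := by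
      intro r
      have := (hg (-r)).comp r (hasDerivAt_neg r)
      simpa [mul_comm, Function.comp_def] using this
    have H := ode_dist_fwd hw hF hG (s := -s) (by linarith)
    rw [abs_of_neg hs]
    simpa using H

/-- Translation for set lintegrals over `Ioc`. -/
lemma lint_translate (f : ℝ → ℝ≥0∞) (a b s : ℝ) :
    ∫⁻ x in Ioc a b, f x = ∫⁻ x in Ioc (a - s) (b - s), f (x + s) := by
  have h := (measurePreserving_add_right (volume : Measure ℝ) s).setLIntegral_comp_preimage_emb
    (MeasurableEquiv.addRight s).measurableEmbedding f (Ioc a b)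
  have hs : (· + s) ⁻¹' Ioc a b = Ioc (a - s) (b - s) := by
    ext x
    simp only [mem_preimage, mem_Ioc]
    constructor <;> intro h <;> exact ⟨by linarith [h.1], by linarith [h.2]⟩
  rw [← h, hs]

/-- Shift invariance of the lintegral of a 1-periodic function. -/
lemma lint_per {f : ℝ → ℝ≥0∞} (hper : ∀ x, f (x + 1) = f x) (c : ℝ) :
    ∫⁻ x in Ioc c (c+1), f x = ∫⁻ x in Ioc (0:ℝ) 1, f x := by
  have hnat : ∀ (n : ℕ) (x : ℝ), f (x + n) = f x := by
    intro n
    induction n with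
    | zero => simp
    | succ k ih =>
      intro x
      have h : (x : ℝ) + ((k+1 : ℕ) : ℝ) = (x + k) + 1 := by push_cast; ring
      rw [h, hper, ih]
  have hint : ∀ (n : ℤ) (x : ℝ), f (x + n) = f x := by
    intro n x
    cases n with
    | ofNat m => simpa using hnat m x
    | negSucc m =>
      have h : x = (x + (Int.negSucc m : ℤ)) + ((m+1 : ℕ) : ℝ) := by
        push_cast [Int.negSucc_eq]; ring
      conv_rhs => rw [h, hnat]
  set m : ℝ := ((⌊c⌋ : ℤ) : ℝ) with hm
  have h1 : m ≤ c := Int.floor_le c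
  have h2 : c < m + 1 := Int.lt_floor_add_one c
  have hsplit1 : ∫⁻ x in Ioc c (c+1), f x
      = (∫⁻ x in Ioc c (m+1), f x) + ∫⁻ x in Ioc (m+1) (c+1), f x := by
    rw [← lintegral_union measurableSet_Ioc (Ioc_disjoint_Ioc_of_le le_rfl),
      Ioc_union_Ioc_eq_Ioc (by linarith) (by linarith)]
  have htr : ∫⁻ x in Ioc (m+1) (c+1), f x = ∫⁻ x in Ioc m c, f x := by
    rw [lint_translate f _ _ 1]
    simp only [add_sub_cancel_right, hper]
  have hsplit2 : ∫⁻ x in Ioc m (m+1), f x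
      = (∫⁻ x in Ioc m c, f x) + ∫⁻ x in Ioc c (m+1), f x := by
    rw [← lintegral_union measurableSet_Ioc (Ioc_disjoint_Ioc_of_le le_rfl),
      Ioc_union_Ioc_eq_Ioc h1 (by linarith)]
  have hstep : ∫⁻ x in Ioc c (c+1), f x = ∫⁻ x in Ioc m (m+1), f x := by
    rw [hsplit1, htr, hsplit2, add_comm]
  rw [hstep, lint_translate f m (m+1) m]
  simp only [sub_self, add_sub_cancel_left]
  simp only [hm, hint ⌊c⌋]


open MeasureTheory

/-- The `L²` norm on `(0,1)`. -/
noncomputable def L2norm (u : ℝ → ℝ) : ℝ :=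
  Real.sqrt (∫ x in Set.Ioo (0:ℝ) 1, (u x) ^ 2)

/-- Stability of composition with the backward flow: if `b` is `L`-Lipschitz and
`1`-periodic, `y_x` is the flow of `ẏ = b(y)`, `y_x(0) = x`, and `u` is `1`-periodic and
square integrable on `(0,1)`, then `‖u(y_·(−t))‖_{L²(0,1)} ≤ e^{L|t|/2} ‖u‖_{L²(0,1)}`. -/
theorem stmt1 (b : ℝ → ℝ) (L : ℝ) (hL : 0 ≤ L)
    (hlip : ∀ x z : ℝ, |b x - b z| ≤ L * |x - z|)
    (hbper : ∀ x, b (x + 1) = b x)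
    (y : ℝ → ℝ → ℝ)
    (hy0 : ∀ x, y x 0 = x)
    (hyode : ∀ x t, HasDerivAt (y x) (b (y x t)) t)
    (u : ℝ → ℝ) (huper : ∀ x, u (x + 1) = u x)
    (humeas : Measurable u)
    (hu2 : IntegrableOn (fun x => (u x) ^ 2) (Set.Ioo (0:ℝ) 1))
    (t : ℝ) :
    L2norm (fun x => u (y x (-t))) ≤ Real.exp (L * |t| / 2) * L2norm u := by
  have hbK : LipschitzWith ⟨L, hL⟩ b := by
    apply LipschitzWith.of_dist_le_mul
    intro x z
    rw [Real.dist_eq, Real.dist_eq]; exact hlip x z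
  -- derivative of shifted trajectories
  have hshift : ∀ x s r, HasDerivAt (fun r => y x (s + r)) (b (y x (s + r))) r := by
    intro x s r
    have := (hyode x (s + r)).comp r ((hasDerivAt_id r).const_add s)
    simpa [Function.comp_def] using this
  -- flow property
  have flow : ∀ x s r, y (y x s) r = y x (s + r) := by
    intro x s r
    exact ode_eq_aux hbK (hyode (y x s)) (hshift x s) (by simp [hy0]) r
  have gh : ∀ x, y (y x (-t)) t = x := by
    intro x; rw [flow]; simp [hy0]
  have hginv : ∀ z, y (y z t) (-t) = z := by
    intro z; rw [flow]; simp [hy0]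
  -- periodicity of the flow
  have per : ∀ x s, y (x + 1) s = y x s + 1 := by
    intro x s
    have hgd : ∀ s, HasDerivAt (fun s => y x s + 1) (b (y x s + 1)) s := by
      intro s
      rw [hbper]
      exact (hyode x s).add_const 1
    exact ode_eq_aux hbK (hyode (x+1)) hgd (by simp [hy0]) s
  -- Lipschitz bound on the flow maps
  have lipb : ∀ (s x z : ℝ), dist (y x s) (y z s) ≤ Real.exp (L * |s|) * dist x z := by
    intro s x z
    have := ode_dist_aux hbK (hyode x) (hyode z) s
    simp only [hy0] at this; rw [mul_comm] at this; exact this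
  set E : ℝ := Real.exp (L * |t|) with hE
  have hE0 : 0 < E := Real.exp_pos _
  set h : ℝ → ℝ := fun x => y x (-t) with hh
  set g : ℝ → ℝ := fun z => y z t with hgdef
  have hlip_h : LipschitzWith E.toNNReal h := by
    apply LipschitzWith.of_dist_le_mul
    intro x z
    simpa [Real.coe_toNNReal _ hE0.le, abs_neg] using lipb (-t) x z
  have hlip_g : LipschitzWith E.toNNReal g := by
    apply LipschitzWith.of_dist_le_mul
    intro x z
    simpa [Real.coe_toNNReal _ hE0.le] using lipb t x z
  have hmeas_h : Measurable h := hlip_h.continuous.measurable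
  -- trajectories from distinct points never meet
  have hne : ∀ x z : ℝ, x ≠ z → ∀ s, y x s ≠ y z s := by
    intro x z hxz s hs
    apply hxz
    have := ode_eq_aux hbK (hshift x s) (hshift z s) (by simpa using hs) (-s)
    simpa [hy0] using this
  -- strict monotonicity of h
  have hmono : StrictMono h := by
    intro x z hxz
    rcases lt_trichotomy (h x) (h z) with hc | hc | hc
    · exact hc
    · exact absurd hc (hne x z (ne_of_lt hxz) (-t))
    · exfalso
      have hcont : Continuous (fun s => y z s - y x s) :=
        (continuous_iff_continuousAt.2 fun s => (hyode z s).continuousAt).sub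
          (continuous_iff_continuousAt.2 fun s => (hyode x s).continuousAt)
      have h0m : (0:ℝ) ∈ Set.uIcc ((fun s => y z s - y x s) 0) ((fun s => y z s - y x s) (-t)) := by
        simp only [hy0]
        rcases le_total (z - x) (y z (-t) - y x (-t)) with hle | hle
        · rw [Set.uIcc_of_le hle]
          exact ⟨by linarith, by nlinarith [sub_pos.mpr hxz]⟩
        · rw [Set.uIcc_of_ge hle]
          constructor
          · simp only [hh] at hc; linarith
          · linarith [sub_pos.mpr hxz]
      obtain ⟨s, _, hs0⟩ := intermediate_value_uIcc hcont.continuousOn h0m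
      exact hne z x (ne_of_lt hxz).symm s (by linarith [sub_eq_zero.mp hs0])
  set c : ℝ := g 0 with hcdef
  have hc0 : h c = 0 := hginv 0
  have hc1 : h (c + 1) = 1 := by
    show y (c+1) (-t) = 1
    rw [per]
    have : y c (-t) = 0 := hc0
    rw [this]; norm_num
  have hio : ∀ x, x ∈ Set.Ioo c (c+1) ↔ h x ∈ Set.Ioo (0:ℝ) 1 := by
    intro x
    constructor
    · rintro ⟨h1, h2⟩
      exact ⟨hc0 ▸ hmono h1, hc1 ▸ hmono h2⟩
    · rintro ⟨h1, h2⟩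
      exact ⟨hmono.lt_iff_lt.mp (by rw [hc0]; exact h1),
        hmono.lt_iff_lt.mp (by rw [hc1]; exact h2)⟩
  have hsetid : ∀ A : Set ℝ, h ⁻¹' A ∩ Set.Ioo c (c+1) = g '' (A ∩ Set.Ioo 0 1) := by
    intro A
    ext x
    simp only [Set.mem_inter_iff, Set.mem_preimage, Set.mem_image]
    constructor
    · rintro ⟨hA, hx⟩
      exact ⟨h x, ⟨hA, (hio x).mp hx⟩, gh x⟩
    · rintro ⟨z, ⟨hzA, hz01⟩, rfl⟩
      have hz : h (g z) = z := hginv z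
      refine ⟨by rw [hz]; exact hzA, (hio (g z)).mpr (by rw [hz]; exact hz01)⟩
  -- the transported measure is dominated
  set ν : Measure ℝ := Measure.map h (volume.restrict (Set.Ioo c (c+1))) with hν
  have hnu_le : ν ≤ (E.toNNReal : ℝ≥0∞) • volume.restrict (Set.Ioo (0:ℝ) 1) := by
    rw [Measure.le_iff]
    intro A hA
    rw [hν, Measure.map_apply hmeas_h hA, Measure.restrict_apply (hmeas_h hA), hsetid A,
      Measure.smul_apply, Measure.restrict_apply hA, smul_eq_mul]
    calc volume (g '' (A ∩ Set.Ioo 0 1))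
        = μH[1] (g '' (A ∩ Set.Ioo 0 1)) := by rw [MeasureTheory.hausdorffMeasure_real]
      _ ≤ (E.toNNReal : ℝ≥0∞) ^ (1:ℝ) * μH[1] (A ∩ Set.Ioo 0 1) :=
          hlip_g.hausdorffMeasure_image_le zero_le_one _
      _ = (E.toNNReal : ℝ≥0∞) * volume (A ∩ Set.Ioo 0 1) := by
          rw [ENNReal.rpow_one, MeasureTheory.hausdorffMeasure_real]
  set GF : ℝ → ℝ≥0∞ := fun x => ENNReal.ofReal ((u x)^2) with hGF
  have hGmeas : Measurable GF := (humeas.pow_const 2).ennreal_ofReal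
  have hGh_per : ∀ x, GF (h (x+1)) = GF (h x) := by
    intro x
    show GF (y (x+1) (-t)) = GF (y x (-t))
    rw [per, hGF]
    simp only [huper]
  -- lintegral chain
  have hchain : ∫⁻ x in Set.Ioo (0:ℝ) 1, GF (h x)
      ≤ (E.toNNReal : ℝ≥0∞) * ∫⁻ x in Set.Ioo (0:ℝ) 1, GF x := by
    have e1 : ∫⁻ x in Set.Ioo (0:ℝ) 1, GF (h x) = ∫⁻ x in Set.Ioc c (c+1), GF (h x) := by
      rw [restrict_Ioo_eq_restrict_Ioc]
      exact (lint_per hGh_per c).symm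
    have e2 : ∫⁻ x in Set.Ioc c (c+1), GF (h x) = ∫⁻ z, GF z ∂ν := by
      rw [← restrict_Ioo_eq_restrict_Ioc, hν, lintegral_map hGmeas hmeas_h]
    rw [e1, e2]
    calc ∫⁻ z, GF z ∂ν
        ≤ ∫⁻ z, GF z ∂((E.toNNReal : ℝ≥0∞) • volume.restrict (Set.Ioo (0:ℝ) 1)) :=
          lintegral_mono' hnu_le le_rfl
      _ = (E.toNNReal : ℝ≥0∞) * ∫⁻ x in Set.Ioo (0:ℝ) 1, GF x := lintegral_smul_measure _ _
  -- pass to real integrals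
  have hBfin : ∫⁻ x in Set.Ioo (0:ℝ) 1, GF x < ⊤ := hu2.setLIntegral_lt_top
  have hB : ∫ x in Set.Ioo (0:ℝ) 1, (u x)^2 = (∫⁻ x in Set.Ioo (0:ℝ) 1, GF x).toReal :=
    integral_eq_lintegral_of_nonneg_ae (Filter.Eventually.of_forall fun x => sq_nonneg _)
      ((humeas.pow_const 2).aestronglyMeasurable)
  have hA : ∫ x in Set.Ioo (0:ℝ) 1, (u (h x))^2 = (∫⁻ x in Set.Ioo (0:ℝ) 1, GF (h x)).toReal :=
    integral_eq_lintegral_of_nonneg_ae (Filter.Eventually.of_forall fun x => sq_nonneg _)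
      (((humeas.comp hmeas_h).pow_const 2).aestronglyMeasurable)
  have hAB : ∫ x in Set.Ioo (0:ℝ) 1, (u (h x))^2 ≤ E * ∫ x in Set.Ioo (0:ℝ) 1, (u x)^2 := by
    rw [hA, hB]
    have hmulfin : (E.toNNReal : ℝ≥0∞) * ∫⁻ x in Set.Ioo (0:ℝ) 1, GF x ≠ ⊤ :=
      ENNReal.mul_ne_top ENNReal.coe_ne_top hBfin.ne
    calc (∫⁻ x in Set.Ioo (0:ℝ) 1, GF (h x)).toReal
        ≤ ((E.toNNReal : ℝ≥0∞) * ∫⁻ x in Set.Ioo (0:ℝ) 1, GF x).toReal :=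
          ENNReal.toReal_mono hmulfin hchain
      _ = E * (∫⁻ x in Set.Ioo (0:ℝ) 1, GF x).toReal := by
          rw [ENNReal.toReal_mul, ENNReal.coe_toReal, Real.coe_toNNReal _ hE0.le]
  -- conclude
  have hres : L2norm (fun x => u (y x (-t))) = Real.sqrt (∫ x in Set.Ioo (0:ℝ) 1, (u (h x))^2) := rfl
  rw [hres]
  unfold L2norm
  calc Real.sqrt (∫ x in Set.Ioo (0:ℝ) 1, (u (h x))^2)
      ≤ Real.sqrt (E * ∫ x in Set.Ioo (0:ℝ) 1, (u x)^2) := Real.sqrt_le_sqrt hAB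
    _ = Real.sqrt E * Real.sqrt (∫ x in Set.Ioo (0:ℝ) 1, (u x)^2) := Real.sqrt_mul hE0.le _
    _ = Real.exp (L * |t| / 2) * Real.sqrt (∫ x in Set.Ioo (0:ℝ) 1, (u x)^2) := by
        rw [Real.exp_half, hE]
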